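/- Let G be a group, n ≥ 1, and ρ₁, ρ₂ : G → GL(n,ℝ) group homomorphisms. If there exists an invertible complex n×n matrix M such that M·ρ₁(g) = ρ₂(g)·M for all g ∈ G (viewing the real matrices ρᵢ(g) as complex matrices), then there exists an invertible real n×n matrix M' such that M'·ρ₁(g) = ρ₂(g)·M' for all g ∈ G. -/

import Mathlib

open Matrix Polynomial

/-- Two real representations of a group that are conjugate by an invertible complex matrix
are conjugate by an invertible real matrix. -/
theorem real_conjugacy_of_complex_conjugacy
    (n : ℕ) (hn : 1 ≤ n) (G : Type*) [Group G]
    (ρ₁ ρ₂ : G →* GL (Fin n) ℝ)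
    (M : Matrix (Fin n) (Fin n) ℂ) (hM : IsUnit M)
    (h : ∀ g : G, M * ((ρ₁ g : Matrix (Fin n) (Fin n) ℝ).map (Complex.ofReal ·))
        = ((ρ₂ g : Matrix (Fin n) (Fin n) ℝ).map (Complex.ofReal ·)) * M) :
    ∃ M' : Matrix (Fin n) (Fin n) ℝ, IsUnit M' ∧
      ∀ g : G, M' * (ρ₁ g : Matrix (Fin n) (Fin n) ℝ)
        = (ρ₂ g : Matrix (Fin n) (Fin n) ℝ) * M' := by
  set A : Matrix (Fin n) (Fin n) ℝ := M.map Complex.re with hA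
  set B : Matrix (Fin n) (Fin n) ℝ := M.map Complex.im with hB
  have hAc : ∀ g : G, A * (ρ₁ g : Matrix (Fin n) (Fin n) ℝ)
      = (ρ₂ g : Matrix (Fin n) (Fin n) ℝ) * A := by
    intro g
    ext i j
    have := congrArg (fun X => (X i j).re) (h g)
    simpa [Matrix.mul_apply, Complex.mul_re, Matrix.map_apply, Complex.re_sum,
      Finset.sum_sub_distrib, hA] using this
  have hBc : ∀ g : G, B * (ρ₁ g : Matrix (Fin n) (Fin n) ℝ)
      = (ρ₂ g : Matrix (Fin n) (Fin n) ℝ) * B := by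
    intro g
    ext i j
    have := congrArg (fun X => (X i j).im) (h g)
    simpa [Matrix.mul_apply, Complex.mul_im, Matrix.map_apply, Complex.im_sum,
      Finset.sum_add_distrib, hB] using this
  set P : Polynomial ℝ :=
    (A.map Polynomial.C + (Polynomial.X : ℝ[X]) • B.map Polynomial.C).det with hP
  have hPI : (Polynomial.aeval Complex.I : ℝ[X] →ₐ[ℝ] ℂ) P = M.det := by
    rw [hP, AlgHom.map_det]
    congr 1
    ext i j
    simp only [Matrix.map_apply, Matrix.add_apply, Matrix.smul_apply, smul_eq_mul,
      AlgHom.mapMatrix_apply, map_add, _root_.map_mul, Polynomial.aeval_C, Polynomial.aeval_X, Complex.coe_algebraMap,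
      hA, hB]
    rw [mul_comm]
    exact Complex.re_add_im _
  have hdetM : M.det ≠ 0 := by
    have := (Matrix.isUnit_iff_isUnit_det M).mp hM
    exact IsUnit.ne_zero this
  have hPne : P ≠ 0 := by
    intro h0
    rw [h0] at hPI
    simp at hPI
    exact hdetM hPI.symm
  obtain ⟨x₀, hx₀⟩ : ∃ x₀ : ℝ, P.eval x₀ ≠ 0 := by
    by_contra hc
    push_neg at hc
    exact hPne (Polynomial.zero_of_eval_zero P hc)
  have heval : ∀ x : ℝ, P.eval x = (A + x • B).det := by
    intro x
    rw [hP, ← Polynomial.coe_evalRingHom, RingHom.map_det]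
    congr 1
    ext i j
    simp [Matrix.map_apply, Matrix.add_apply, Matrix.smul_apply]
    ring
  refine ⟨A + x₀ • B, ?_, ?_⟩
  · rw [Matrix.isUnit_iff_isUnit_det]
    rw [heval x₀] at hx₀
    exact isUnit_iff_ne_zero.mpr hx₀
  · intro g
    rw [add_mul, mul_add, smul_mul_assoc, mul_smul_comm, hAc g, hBc g]
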